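/- Let F be a non-trivial increasing family of subsets of a finite set X and k a positive integer. Then q_c(F_k) ≥ q_c(F)/k, where q_c denotes the expectation threshold and F_k the k-cloned family. -/
import Mathlib


open Finset

variable {α : Type*}

/-- Probability that a `p`-random subset of a finite type `α` lies in the family `F`. -/
noncomputable def probMem [Fintype α] [DecidableEq α] (p : ℝ) (F : Finset (Finset α)) : ℝ :=
  ∑ A ∈ F, p ^ A.card * (1 - p) ^ (Fintype.card α - A.card)

/-- `F` is an increasing family (up-set). -/
def IncreasingFam [DecidableEq α] (F : Finset (Finset α)) : Prop :=
  ∀ A ∈ F, ∀ B : Finset α, A ⊆ B → B ∈ F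

/-- `F` is non-trivial: not empty and not all of `P(X)`. -/
def NontrivialFam [Fintype α] [DecidableEq α] (F : Finset (Finset α)) : Prop :=
  F ≠ ∅ ∧ F ≠ Finset.univ

/-- The `q`-cost of a family `G`. -/
noncomputable def cost [DecidableEq α] (q : ℝ) (G : Finset (Finset α)) : ℝ :=
  ∑ S ∈ G, q ^ S.card

/-- `G` covers `F`: every member of `F` contains some member of `G`. -/
def Covers [DecidableEq α] (G F : Finset (Finset α)) : Prop :=
  ∀ A ∈ F, ∃ S ∈ G, S ⊆ A

/-- The expectation threshold of `F`. -/
noncomputable def qc [Fintype α] [DecidableEq α] (F : Finset (Finset α)) : ℝ :=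
  sSup {q : ℝ | q ∈ Set.Icc (0 : ℝ) 1 ∧
    ∃ G : Finset (Finset α), Covers G F ∧ cost q G ≤ 1 / 2}

/-- The `k`-cloned family `F_k ⊂ P(X × [k])`. -/
def clone [Fintype α] [DecidableEq α] (k : ℕ) (F : Finset (Finset α)) :
    Finset (Finset (α × Fin k)) :=
  Finset.univ.filter (fun S => S.image Prod.fst ∈ F)

/-- `Ψ(S)`: minimal preimages of `S` under the projection `π : X × [k] → X`. -/
def Psi [Fintype α] [DecidableEq α] (k : ℕ) (S : Finset α) :
    Finset (Finset (α × Fin k)) :=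
  Finset.univ.filter (fun S' => S'.image Prod.fst = S ∧ S'.card = S.card)

/-- `l(F)`: the size of a largest minimal element of `F`. -/
def ell [Fintype α] [DecidableEq α] (F : Finset (Finset α)) : ℕ :=
  (F.filter (fun A => ∀ B ⊂ A, B ∉ F)).sup Finset.card

lemma sum_biUnion_le_aux {β γ : Type*} [DecidableEq γ] (s : Finset β) (t : β → Finset γ)
    (f : γ → ℝ) (hf : ∀ x, 0 ≤ f x) :
    ∑ x ∈ s.biUnion t, f x ≤ ∑ a ∈ s, ∑ x ∈ t a, f x := by
  classical
  induction s using Finset.cons_induction with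
  | empty => simp
  | cons a s ha ih =>
    rw [Finset.cons_eq_insert, Finset.biUnion_insert, Finset.sum_insert ha]
    calc ∑ x ∈ t a ∪ s.biUnion t, f x
        ≤ ∑ x ∈ t a, f x + ∑ x ∈ s.biUnion t, f x := by
          have h : ∑ x ∈ t a ∪ s.biUnion t, f x + ∑ x ∈ t a ∩ s.biUnion t, f x
              = ∑ x ∈ t a, f x + ∑ x ∈ s.biUnion t, f x := Finset.sum_union_inter
          have h2 : (0:ℝ) ≤ ∑ x ∈ t a ∩ s.biUnion t, f x :=
            Finset.sum_nonneg fun x _ => hf x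
          linarith
      _ ≤ ∑ x ∈ t a, f x + ∑ b ∈ s, ∑ x ∈ t b, f x := by linarith

lemma card_Psi_le [Fintype α] [DecidableEq α] (k : ℕ) (S : Finset α) :
    (Psi k S).card ≤ k ^ S.card := by
  classical
  have hsub : Psi k S ⊆ (S.pi (fun _ => (Finset.univ : Finset (Fin k)))).image
      (fun f => S.attach.image (fun x => (x.1, f x.1 x.2))) := by
    intro S' hS'
    simp only [Psi, Finset.mem_filter, Finset.mem_univ, true_and] at hS'
    obtain ⟨himg, hcard⟩ := hS'
    have hex : ∀ a ∈ S, ∃ p, p ∈ S' ∧ p.1 = a := by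
      intro a ha
      rw [← himg] at ha
      obtain ⟨p, hp, hpa⟩ := Finset.mem_image.1 ha
      exact ⟨p, hp, hpa⟩
    choose g hg1 hg2 using hex
    refine Finset.mem_image.2 ⟨fun a ha => (g a ha).2, ?_, ?_⟩
    · simp [Finset.mem_pi]
    · have hinj : Set.InjOn (fun x : {x // x ∈ S} => (x.1, (g x.1 x.2).2)) ↑S.attach := by
        intro x _ y _ hxy
        have : x.1 = y.1 := congrArg Prod.fst hxy
        exact Subtype.ext this
      have hsub2 : S.attach.image (fun x => (x.1, (g x.1 x.2).2)) ⊆ S' := by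
        intro p hp
        obtain ⟨x, -, rfl⟩ := Finset.mem_image.1 hp
        have h1 := hg1 x.1 x.2
        have h2 := hg2 x.1 x.2
        have : (x.1, (g x.1 x.2).2) = g x.1 x.2 := Prod.ext h2.symm rfl
        rw [this]; exact h1
      show S.attach.image (fun x => (x.1, (g x.1 x.2).2)) = S'
      refine Finset.eq_of_subset_of_card_le hsub2 ?_
      rw [Finset.card_image_of_injOn hinj, Finset.card_attach, hcard]
  calc (Psi k S).card ≤ _ := Finset.card_le_card hsub
    _ ≤ (S.pi (fun _ => (Finset.univ : Finset (Fin k)))).card := Finset.card_image_le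
    _ = k ^ S.card := by rw [Finset.card_pi]; simp [Finset.prod_const]

lemma Psi_cover [Fintype α] [DecidableEq α] {k : ℕ} {S : Finset α}
    {S' : Finset (α × Fin k)} (hST : S ⊆ S'.image Prod.fst) :
    ∃ S'' ∈ Psi k S, S'' ⊆ S' := by
  classical
  have hex : ∀ a ∈ S, ∃ p, p ∈ S' ∧ p.1 = a := by
    intro a ha
    obtain ⟨p, hp, hpa⟩ := Finset.mem_image.1 (hST ha)
    exact ⟨p, hp, hpa⟩
  choose g hg1 hg2 using hex
  refine ⟨S.attach.image (fun x => g x.1 x.2), ?_, ?_⟩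
  · have hinj : Set.InjOn (fun x : {x // x ∈ S} => g x.1 x.2) ↑S.attach := by
      intro x _ y _ hxy
      have : x.1 = y.1 := by
        rw [← hg2 x.1 x.2, ← hg2 y.1 y.2]
        exact congrArg Prod.fst hxy
      exact Subtype.ext this
    simp only [Psi, Finset.mem_filter, Finset.mem_univ, true_and]
    constructor
    · ext a
      simp only [Finset.mem_image, Finset.mem_attach, true_and, Subtype.exists]
      constructor
      · rintro ⟨p, ⟨b, hb, rfl⟩, rfl⟩
        rw [hg2 b hb]; exact hb
      · intro ha
        exact ⟨g a ha, ⟨a, ha, rfl⟩, hg2 a ha⟩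
    · rw [Finset.card_image_of_injOn hinj, Finset.card_attach]
  · intro p hp
    obtain ⟨x, -, rfl⟩ := Finset.mem_image.1 hp
    exact hg1 x.1 x.2

theorem stmt8 [Fintype α] [DecidableEq α] (F : Finset (Finset α))
    (hinc : IncreasingFam F) (hnt : NontrivialFam F) (k : ℕ) (hk : 0 < k) :
    qc (clone k F) ≥ qc F / k := by
  classical
  have hkR : (0:ℝ) < (k:ℝ) := by exact_mod_cast hk
  -- empty set is not in F
  have hempty : ∅ ∉ F := by
    intro h
    exact hnt.2 (Finset.eq_univ_of_forall fun B => hinc ∅ h B (Finset.empty_subset B))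
  set B : Set ℝ := {q : ℝ | q ∈ Set.Icc (0 : ℝ) 1 ∧
    ∃ G : Finset (Finset (α × Fin k)), Covers G (clone k F) ∧ cost q G ≤ 1 / 2} with hB
  set A : Set ℝ := {q : ℝ | q ∈ Set.Icc (0 : ℝ) 1 ∧
    ∃ G : Finset (Finset α), Covers G F ∧ cost q G ≤ 1 / 2} with hA
  have hBdd : BddAbove B := ⟨1, fun q hq => hq.1.2⟩
  have h0B : (0:ℝ) ∈ B := by
    refine ⟨⟨le_refl 0, zero_le_one⟩, clone k F, fun A' hA' => ⟨A', hA', le_refl _⟩, ?_⟩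
    have : ∀ S' ∈ clone k F, (0:ℝ) ^ S'.card = 0 := by
      intro S' hS'
      have hmem : S'.image Prod.fst ∈ F := by
        simpa [clone] using hS'
      have : S' ≠ ∅ := by
        rintro rfl
        simp only [Finset.image_empty] at hmem
        exact hempty hmem
      have hc : 0 < S'.card := Finset.card_pos.2 (Finset.nonempty_iff_ne_empty.2 this)
      exact zero_pow hc.ne'
    rw [cost, Finset.sum_congr rfl this]
    simp
  have hsupB0 : (0:ℝ) ≤ sSup B := le_csSup hBdd h0B
  -- key: for every q ∈ A, q / k ∈ B
  have hkey : ∀ q ∈ A, q / k ∈ B := by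
    rintro q ⟨⟨hq0, hq1⟩, G, hcov, hcost⟩
    refine ⟨⟨div_nonneg hq0 hkR.le, ?_⟩, G.biUnion (Psi k), ?_, ?_⟩
    · rw [div_le_one hkR]
      have h1k : (1:ℝ) ≤ k := by exact_mod_cast hk
      linarith
    · intro S' hS'
      have hmem : S'.image Prod.fst ∈ F := by simpa [clone] using hS'
      obtain ⟨S, hSG, hSsub⟩ := hcov _ hmem
      have : S ⊆ S'.image Prod.fst := hSsub
      obtain ⟨S'', hS''Psi, hS''sub⟩ := Psi_cover this
      exact ⟨S'', Finset.mem_biUnion.2 ⟨S, hSG, hS''Psi⟩, hS''sub⟩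
    · have hqk0 : (0:ℝ) ≤ q / k := div_nonneg hq0 hkR.le
      calc cost (q / k) (G.biUnion (Psi k))
          ≤ ∑ S ∈ G, ∑ S'' ∈ Psi k S, (q / k) ^ S''.card :=
            sum_biUnion_le_aux G (Psi k) _ (fun S'' => pow_nonneg hqk0 _)
        _ ≤ ∑ S ∈ G, q ^ S.card := by
            apply Finset.sum_le_sum
            intro S hS
            have hcards : ∀ S'' ∈ Psi k S, (q / k) ^ S''.card = (q / k) ^ S.card := by
              intro S'' hS''
              simp only [Psi, Finset.mem_filter, Finset.mem_univ, true_and] at hS''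
              rw [hS''.2]
            rw [Finset.sum_congr rfl hcards, Finset.sum_const, nsmul_eq_mul]
            calc ((Psi k S).card : ℝ) * (q / k) ^ S.card
                ≤ (k ^ S.card : ℝ) * (q / k) ^ S.card := by
                  apply mul_le_mul_of_nonneg_right _ (pow_nonneg hqk0 _)
                  exact_mod_cast card_Psi_le k S
              _ = ((k:ℝ) * (q / k)) ^ S.card := by rw [mul_pow]
              _ = q ^ S.card := by rw [mul_div_cancel₀ q hkR.ne']
        _ = cost q G := rfl
        _ ≤ 1 / 2 := hcost
  -- conclude
  have h1 : qc F ≤ k * sSup B := by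
    apply Real.sSup_le
    · intro q hq
      have : q / k ≤ sSup B := le_csSup hBdd (hkey q hq)
      calc q = k * (q / k) := by field_simp
        _ ≤ k * sSup B := by nlinarith
    · positivity
  rw [ge_iff_le, div_le_iff₀ hkR]
  calc qc F ≤ k * sSup B := h1
    _ = qc (clone k F) * k := by rw [mul_comm]; rfl
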